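/- Let Φ be a Young function in ∇₂ and 0 < q < ∞. Then there is a constant C such that for every r > 0, ∫_r^∞ [ (1/t)·Φ⁻¹(1/t)^{-1} ]^q dt/t ≤ C·r^{-q}·∫₀^r Φ⁻¹(1/t)^{-q} dt/t. -/

import Mathlib

open MeasureTheory ENNReal NNReal

noncomputable section

/-- A Young function `Φ : [0,∞] → [0,∞]`: increasing, convex, `Φ(0)=0`, `Φ(∞)=∞`,
`lim_{t→0}Φ(t)=0`, with `a(Φ)<∞` and `b(Φ)>0`. -/
structure YoungFunction (Φ : ℝ≥0∞ → ℝ≥0∞) : Prop where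
  mono : Monotone Φ
  map_zero : Φ 0 = 0
  map_top : Φ ⊤ = ⊤
  convex : ∀ (a b : ℝ≥0) (x y : ℝ≥0∞), a + b = 1 →
    Φ ((a : ℝ≥0∞) * x + (b : ℝ≥0∞) * y) ≤ (a : ℝ≥0∞) * Φ x + (b : ℝ≥0∞) * Φ y
  tendsto_zero : Filter.Tendsto Φ (nhdsWithin 0 (Set.Ioi 0)) (nhds 0)
  exists_pos : ∃ t : ℝ≥0∞, t ≠ ⊤ ∧ 0 < Φ t
  exists_finite : ∃ t : ℝ≥0∞, 0 < t ∧ Φ t < ⊤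

/-- The generalized inverse `Φ⁻¹(u) = inf{t ≥ 0 : Φ(t) > u}` (with `inf ∅ = ∞`,
so `Φ⁻¹(∞) = ∞`). -/
def yinv (Φ : ℝ≥0∞ → ℝ≥0∞) (u : ℝ≥0∞) : ℝ≥0∞ := sInf {t | u < Φ t}


lemma yinv_mono (Φ : ℝ≥0∞ → ℝ≥0∞) : Monotone (yinv Φ) :=
  fun u v huv => sInf_le_sInf (fun t ht => lt_of_le_of_lt huv ht)

section nabla
variable {Φ : ℝ≥0∞ → ℝ≥0∞} {k : ℝ≥0} (hk : 1 < k)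
  (hΔ : ∀ r : ℝ≥0∞, Φ r ≤ (1 / (2 * (k : ℝ≥0∞))) * Φ ((k : ℝ≥0∞) * r))

lemma kne0 (hk : 1 < k) : (k : ℝ≥0∞) ≠ 0 := by exact_mod_cast (zero_lt_one.trans hk).ne'
lemma k2ne0 (hk : 1 < k) : (2 * (k : ℝ≥0∞)) ≠ 0 := mul_ne_zero two_ne_zero (kne0 hk)
lemma k2net : (2 * (k : ℝ≥0∞)) ≠ ⊤ := by simp [ENNReal.mul_ne_top]

include hk hΔ

lemma phi_mul : ∀ r : ℝ≥0∞, 2 * (k : ℝ≥0∞) * Φ r ≤ Φ ((k : ℝ≥0∞) * r) := by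
  intro r
  calc 2 * (k : ℝ≥0∞) * Φ r ≤ 2 * (k : ℝ≥0∞) * ((1 / (2 * (k : ℝ≥0∞))) * Φ ((k : ℝ≥0∞) * r)) :=
        mul_le_mul_right (hΔ r) _
    _ = Φ ((k : ℝ≥0∞) * r) := by
        rw [one_div, ← mul_assoc, ENNReal.mul_inv_cancel (k2ne0 hk) k2net, one_mul]

lemma yinv_nabla : ∀ u : ℝ≥0∞, yinv Φ (2 * (k : ℝ≥0∞) * u) ≤ (k : ℝ≥0∞) * yinv Φ u := by
  intro u
  rw [mul_comm ((k:ℝ≥0∞)) (yinv Φ u), ← ENNReal.div_le_iff_le_mul (Or.inl (kne0 hk)) (Or.inl coe_ne_top)]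
  apply le_sInf
  intro t ht
  have h2 : 2 * (k : ℝ≥0∞) * u < 2 * (k : ℝ≥0∞) * Φ t := by
    exact ENNReal.mul_lt_mul_right (k2ne0 hk) k2net ht
  have h3 : yinv Φ (2 * (k : ℝ≥0∞) * u) ≤ (k : ℝ≥0∞) * t :=
    sInf_le (h2.trans_le (phi_mul hk hΔ t))
  exact ENNReal.div_le_of_le_mul (h3.trans (mul_comm (k : ℝ≥0∞) t).le)

/-- `G s = (Φ⁻¹(s⁻¹))⁻¹`, the function `g` composed with `ofReal`. -/
lemma G_doubling (s : ℝ≥0∞) :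
    (yinv Φ ((2 * (k : ℝ≥0∞) * s))⁻¹)⁻¹ ≤ (k : ℝ≥0∞) * (yinv Φ s⁻¹)⁻¹ := by
  have key : yinv Φ s⁻¹ ≤ (k : ℝ≥0∞) * yinv Φ (2 * (k : ℝ≥0∞) * s)⁻¹ := by
    have : (2 * (k : ℝ≥0∞)) * (2 * (k : ℝ≥0∞) * s)⁻¹ = s⁻¹ := by
      rw [ENNReal.mul_inv (Or.inl (k2ne0 hk)) (Or.inl k2net), ← mul_assoc,
        ENNReal.mul_inv_cancel (k2ne0 hk) k2net, one_mul]
    calc yinv Φ s⁻¹ = yinv Φ ((2 * (k : ℝ≥0∞)) * (2 * (k : ℝ≥0∞) * s)⁻¹) := by rw [this]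
      _ ≤ (k : ℝ≥0∞) * yinv Φ (2 * (k : ℝ≥0∞) * s)⁻¹ := yinv_nabla hk hΔ _
  -- from a ≤ k*b deduce b⁻¹ ≤ k*a⁻¹
  have h1 : ((k : ℝ≥0∞) * yinv Φ (2 * (k : ℝ≥0∞) * s)⁻¹)⁻¹ ≤ (yinv Φ s⁻¹)⁻¹ :=
    ENNReal.inv_le_inv.mpr key
  rw [ENNReal.mul_inv (Or.inl (kne0 hk)) (Or.inl coe_ne_top)] at h1
  calc (yinv Φ ((2 * (k : ℝ≥0∞) * s))⁻¹)⁻¹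
      = (k : ℝ≥0∞) * ((k : ℝ≥0∞)⁻¹ * (yinv Φ (2 * (k : ℝ≥0∞) * s)⁻¹)⁻¹) := by
        rw [← mul_assoc, ENNReal.mul_inv_cancel (kne0 hk) coe_ne_top, one_mul]
    _ ≤ (k : ℝ≥0∞) * (yinv Φ s⁻¹)⁻¹ := mul_le_mul_right h1 _

lemma G_iter (n : ℕ) (s : ℝ≥0∞) :
    (yinv Φ ((2 * (k : ℝ≥0∞)) ^ n * s)⁻¹)⁻¹ ≤ (k : ℝ≥0∞) ^ n * (yinv Φ s⁻¹)⁻¹ := by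
  induction n with
  | zero => simp
  | succ n ih =>
    have : (2 * (k : ℝ≥0∞)) ^ (n + 1) * s = 2 * (k : ℝ≥0∞) * ((2 * (k : ℝ≥0∞)) ^ n * s) := by
      ring
    rw [this]
    calc (yinv Φ (2 * (k : ℝ≥0∞) * ((2 * (k : ℝ≥0∞)) ^ n * s))⁻¹)⁻¹
        ≤ (k : ℝ≥0∞) * (yinv Φ ((2 * (k : ℝ≥0∞)) ^ n * s)⁻¹)⁻¹ := G_doubling hk hΔ _
      _ ≤ (k : ℝ≥0∞) * ((k : ℝ≥0∞) ^ n * (yinv Φ s⁻¹)⁻¹) := mul_le_mul_right ih _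
      _ = (k : ℝ≥0∞) ^ (n + 1) * (yinv Φ s⁻¹)⁻¹ := by ring

end nabla

section posfin
variable {Φ : ℝ≥0∞ → ℝ≥0∞} {k : ℝ≥0}

lemma yinv_pos (hΦ : YoungFunction Φ) {u : ℝ≥0∞} (hu : 0 < u) : 0 < yinv Φ u := by
  have h := hΦ.tendsto_zero.eventually_lt_const hu
  rw [eventually_nhdsWithin_iff] at h
  obtain ⟨ε, hε, hball⟩ := ENNReal.nhds_zero_basis.eventually_iff.mp h
  refine lt_of_lt_of_le hε (le_sInf ?_)
  intro t ht
  by_contra hlt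
  push_neg at hlt
  rcases eq_or_lt_of_le (zero_le : (0:ℝ≥0∞) ≤ t) with h0 | h0
  · rw [← h0] at ht
    simp only [Set.mem_setOf_eq, hΦ.map_zero] at ht
    exact (hu.trans ht).false
  · exact absurd ht (not_lt.mpr (hball hlt h0).le)

lemma yinv_lt_top (hΦ : YoungFunction Φ) (hk : 1 < k)
    (hΔ : ∀ r : ℝ≥0∞, Φ r ≤ (1 / (2 * (k : ℝ≥0∞))) * Φ ((k : ℝ≥0∞) * r))
    {u : ℝ≥0∞} (hu : u ≠ ⊤) : yinv Φ u < ⊤ := by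
  obtain ⟨t₀, ht₀, hpos⟩ := hΦ.exists_pos
  have hiter : ∀ n : ℕ, (2 * (k : ℝ≥0∞)) ^ n * Φ t₀ ≤ Φ ((k : ℝ≥0∞) ^ n * t₀) := by
    intro n
    induction n with
    | zero => simp
    | succ n ih =>
      calc (2 * (k : ℝ≥0∞)) ^ (n + 1) * Φ t₀
          = 2 * (k : ℝ≥0∞) * ((2 * (k : ℝ≥0∞)) ^ n * Φ t₀) := by ring
        _ ≤ 2 * (k : ℝ≥0∞) * Φ ((k : ℝ≥0∞) ^ n * t₀) := mul_le_mul_right ih _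
        _ ≤ Φ ((k : ℝ≥0∞) * ((k : ℝ≥0∞) ^ n * t₀)) := phi_mul hk hΔ _
        _ = Φ ((k : ℝ≥0∞) ^ (n + 1) * t₀) := by ring_nf
  have hfin : ∀ n : ℕ, (k : ℝ≥0∞) ^ n * t₀ < ⊤ :=
    fun n => ENNReal.mul_lt_top (ENNReal.pow_lt_top coe_lt_top : (k : ℝ≥0∞) ^ n < ⊤) (lt_top_iff_ne_top.mpr ht₀)
  rcases eq_or_ne (Φ t₀) ⊤ with htop | hΦfin
  · have : u < Φ t₀ := htop ▸ lt_top_iff_ne_top.mpr hu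
    exact lt_of_le_of_lt (sInf_le this) (by simpa using hfin 0)
  · set M := u / Φ t₀ with hM
    have hMfin : M ≠ ⊤ := (ENNReal.div_lt_top hu hpos.ne').ne
    obtain ⟨n, hn⟩ := ENNReal.exists_nat_gt hMfin
    have h2n : (n : ℝ≥0∞) < 2 ^ n := by exact_mod_cast (Nat.lt_two_pow_self : n < 2 ^ n)
    have h2k : (2 : ℝ≥0∞) ^ n ≤ (2 * (k : ℝ≥0∞)) ^ n := by
      apply pow_le_pow_left₀ (by positivity)
      exact le_mul_of_one_le_right (by positivity) (by exact_mod_cast hk.le)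
    have hMn : M < (2 * (k : ℝ≥0∞)) ^ n := hn.trans (h2n.trans_le h2k)
    have hu' : u < (2 * (k : ℝ≥0∞)) ^ n * Φ t₀ := by
      have := ENNReal.mul_lt_mul_left hpos.ne' hΦfin hMn
      rwa [hM, ENNReal.div_mul_cancel hpos.ne' hΦfin] at this
    exact lt_of_le_of_lt (sInf_le (hu'.trans_le (hiter n))) (hfin n)

lemma g_mono : Monotone (fun t : ℝ => (yinv Φ (ENNReal.ofReal t)⁻¹)⁻¹) := by
  intro a b hab
  exact ENNReal.inv_le_inv.mpr (yinv_mono Φ (ENNReal.inv_le_inv.mpr (ENNReal.ofReal_le_ofReal hab)))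

lemma g_meas : Measurable (fun t : ℝ => (yinv Φ (ENNReal.ofReal t)⁻¹)⁻¹) :=
  g_mono.measurable

lemma g_pos (hΦ : YoungFunction Φ) (hk : 1 < k)
    (hΔ : ∀ r : ℝ≥0∞, Φ r ≤ (1 / (2 * (k : ℝ≥0∞))) * Φ ((k : ℝ≥0∞) * r))
    {r : ℝ} (hr : 0 < r) : 0 < (yinv Φ (ENNReal.ofReal r)⁻¹)⁻¹ := by
  apply ENNReal.inv_pos.mpr
  exact (yinv_lt_top hΦ hk hΔ (by simp [ENNReal.inv_ne_top, ENNReal.ofReal_pos, hr])).ne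

lemma g_lt_top (hΦ : YoungFunction Φ) {r : ℝ} (hr : 0 < r) :
    (yinv Φ (ENNReal.ofReal r)⁻¹)⁻¹ < ⊤ := by
  rw [ENNReal.inv_lt_top]
  exact yinv_pos hΦ (ENNReal.inv_pos.mpr ENNReal.ofReal_ne_top)

end posfin

section key
variable {Φ : ℝ≥0∞ → ℝ≥0∞} {k : ℝ≥0}

lemma pow_eq_rpow_theta (hk : 1 < k) (n : ℕ) :
    (2 * (k : ℝ)) ^ ((n : ℝ) * (Real.log (k : ℝ) / Real.log (2 * (k : ℝ)))) = (k : ℝ) ^ n := by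
  have hkr : (1 : ℝ) < (k : ℝ) := by exact_mod_cast hk
  have hc1 : (1 : ℝ) < 2 * (k : ℝ) := by nlinarith
  have hlc : Real.log (2 * (k : ℝ)) ≠ 0 := (Real.log_pos hc1).ne'
  rw [Real.rpow_def_of_pos (by positivity),
    show Real.log (2 * (k : ℝ)) * ((n : ℝ) * (Real.log (k : ℝ) / Real.log (2 * (k : ℝ))))
      = (n : ℝ) * Real.log (k : ℝ) from by field_simp,
    ← Real.log_pow, Real.exp_log (by positivity)]

lemma g_bound (hk : 1 < k)
    (hΔ : ∀ r : ℝ≥0∞, Φ r ≤ (1 / (2 * (k : ℝ≥0∞))) * Φ ((k : ℝ≥0∞) * r))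
    {r t : ℝ} (hr : 0 < r) (hrt : r < t) :
    (yinv Φ (ENNReal.ofReal t)⁻¹)⁻¹ ≤
      (k : ℝ≥0∞) * ENNReal.ofReal ((t / r) ^ (Real.log (k : ℝ) / Real.log (2 * (k : ℝ)))) *
        (yinv Φ (ENNReal.ofReal r)⁻¹)⁻¹ := by
  have hkr : (1 : ℝ) < (k : ℝ) := by exact_mod_cast hk
  have hc1 : (1 : ℝ) < 2 * (k : ℝ) := by nlinarith
  set θ := Real.log (k : ℝ) / Real.log (2 * (k : ℝ)) with hθ
  have hθ0 : 0 ≤ θ := div_nonneg (Real.log_nonneg hkr.le) (Real.log_nonneg hc1.le)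
  have htr : 1 < t / r := (one_lt_div hr).mpr hrt
  set n := ⌊Real.logb (2 * (k : ℝ)) (t / r)⌋₊ with hn
  have hlogb0 : 0 ≤ Real.logb (2 * (k : ℝ)) (t / r) := Real.logb_nonneg hc1 htr.le
  have hn1 : Real.logb (2 * (k : ℝ)) (t / r) < (n : ℝ) + 1 := Nat.lt_floor_add_one _
  have hn0 : (n : ℝ) ≤ Real.logb (2 * (k : ℝ)) (t / r) := Nat.floor_le hlogb0
  have hcn : (2 * (k : ℝ)) ^ n ≤ t / r := by
    calc (2 * (k : ℝ)) ^ n = (2 * (k : ℝ)) ^ (n : ℝ) := (Real.rpow_natCast _ n).symm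
      _ ≤ (2 * (k : ℝ)) ^ Real.logb (2 * (k : ℝ)) (t / r) :=
          Real.rpow_le_rpow_of_exponent_le hc1.le hn0
      _ = t / r := Real.rpow_logb (by positivity) (ne_of_gt hc1) (by positivity)
  have hcn1 : t / r ≤ (2 * (k : ℝ)) ^ (n + 1) := by
    calc t / r = (2 * (k : ℝ)) ^ Real.logb (2 * (k : ℝ)) (t / r) :=
          (Real.rpow_logb (by positivity) (ne_of_gt hc1) (by positivity)).symm
      _ ≤ (2 * (k : ℝ)) ^ ((n : ℝ) + 1) := Real.rpow_le_rpow_of_exponent_le hc1.le hn1.le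
      _ = (2 * (k : ℝ)) ^ (n + 1) := by
          rw [← Real.rpow_natCast (2 * (k : ℝ)) (n + 1), Nat.cast_add, Nat.cast_one]
  have ht' : t ≤ r * (2 * (k : ℝ)) ^ (n + 1) := by
    rw [div_le_iff₀ hr] at hcn1; linarith
  have hof : ENNReal.ofReal (r * (2 * (k : ℝ)) ^ (n + 1))
      = (2 * (k : ℝ≥0∞)) ^ (n + 1) * ENNReal.ofReal r := by
    rw [mul_comm r, ENNReal.ofReal_mul (by positivity)]
    congr 1
    rw [ENNReal.ofReal_pow (by positivity)]
    congr 1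
    rw [ENNReal.ofReal_mul (by norm_num)]
    simp [ENNReal.ofReal_ofNat, ENNReal.ofReal_coe_nnreal]
  have step1 : (yinv Φ (ENNReal.ofReal t)⁻¹)⁻¹
      ≤ (k : ℝ≥0∞) ^ (n + 1) * (yinv Φ (ENNReal.ofReal r)⁻¹)⁻¹ := by
    calc (yinv Φ (ENNReal.ofReal t)⁻¹)⁻¹
        ≤ (yinv Φ (ENNReal.ofReal (r * (2 * (k : ℝ)) ^ (n + 1)))⁻¹)⁻¹ := g_mono ht'
      _ = (yinv Φ ((2 * (k : ℝ≥0∞)) ^ (n + 1) * ENNReal.ofReal r)⁻¹)⁻¹ := by rw [hof]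
      _ ≤ (k : ℝ≥0∞) ^ (n + 1) * (yinv Φ (ENNReal.ofReal r)⁻¹)⁻¹ := G_iter hk hΔ _ _
  have step2 : (k : ℝ≥0∞) ^ n ≤ ENNReal.ofReal ((t / r) ^ θ) := by
    have hreal : (k : ℝ) ^ n ≤ (t / r) ^ θ := by
      calc (k : ℝ) ^ n = (2 * (k : ℝ)) ^ ((n : ℝ) * θ) := (pow_eq_rpow_theta hk n).symm
        _ = ((2 * (k : ℝ)) ^ (n : ℝ)) ^ θ := Real.rpow_mul (by positivity) _ _
        _ ≤ (t / r) ^ θ := by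
            apply Real.rpow_le_rpow (by positivity) _ hθ0
            rw [Real.rpow_natCast]; exact hcn
    calc (k : ℝ≥0∞) ^ n = ENNReal.ofReal ((k : ℝ) ^ n) := by
          rw [ENNReal.ofReal_pow (by positivity), ENNReal.ofReal_coe_nnreal]
      _ ≤ _ := ENNReal.ofReal_le_ofReal hreal
  calc (yinv Φ (ENNReal.ofReal t)⁻¹)⁻¹
      ≤ (k : ℝ≥0∞) ^ (n + 1) * (yinv Φ (ENNReal.ofReal r)⁻¹)⁻¹ := step1
    _ = (k : ℝ≥0∞) * (k : ℝ≥0∞) ^ n * (yinv Φ (ENNReal.ofReal r)⁻¹)⁻¹ := by ring_nf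
    _ ≤ (k : ℝ≥0∞) * ENNReal.ofReal ((t / r) ^ θ) * (yinv Φ (ENNReal.ofReal r)⁻¹)⁻¹ := by
        exact mul_le_mul_left (mul_le_mul_right step2 _) _

lemma lint_rpow (e : ℝ) (he : e < -1) {r : ℝ} (hr : 0 < r) :
    ∫⁻ t in Set.Ioi r, ENNReal.ofReal (t ^ e) = ENNReal.ofReal (-r ^ (e + 1) / (e + 1)) := by
  rw [← ofReal_integral_eq_lintegral_ofReal (integrableOn_Ioi_rpow_of_lt he hr) ?_,
    integral_Ioi_rpow_of_lt he hr]
  filter_upwards [ae_restrict_mem measurableSet_Ioi] with t ht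
  exact Real.rpow_nonneg (hr.trans ht).le e

end key


/-- if `Φ ∈ ∇₂` and `0 < q < ∞`, then the Arino-Muckenhoupt condition
holds for `φ(t) = Φ⁻¹(1/t)⁻¹`. -/
theorem stmt14 (Φ : ℝ≥0∞ → ℝ≥0∞) (hΦ : YoungFunction Φ)
    (hnabla : ∃ k : ℝ≥0, 1 < k ∧
      ∀ r : ℝ≥0∞, Φ r ≤ (1 / (2 * (k : ℝ≥0∞))) * Φ ((k : ℝ≥0∞) * r))
    (q : ℝ) (hq : 0 < q) :
    ∃ C : ℝ≥0∞, C ≠ ⊤ ∧ ∀ r : ℝ, 0 < r →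
      (∫⁻ t in Set.Ioi r,
          ((ENNReal.ofReal t)⁻¹ * (yinv Φ (ENNReal.ofReal t)⁻¹)⁻¹) ^ q *
            (ENNReal.ofReal t)⁻¹) ≤
        C * (ENNReal.ofReal r)⁻¹ ^ q *
          ∫⁻ t in Set.Ioo (0 : ℝ) r,
            (yinv Φ (ENNReal.ofReal t)⁻¹)⁻¹ ^ q * (ENNReal.ofReal t)⁻¹ := by
  obtain ⟨k, hk, hΔ⟩ := hnabla
  have hkr : (1 : ℝ) < (k : ℝ) := by exact_mod_cast hk
  have hc1 : (1 : ℝ) < 2 * (k : ℝ) := by nlinarith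
  set θ := Real.log (k : ℝ) / Real.log (2 * (k : ℝ)) with hθ
  have hθ0 : 0 ≤ θ := div_nonneg (Real.log_nonneg hkr.le) (Real.log_nonneg hc1.le)
  have hθ1 : θ < 1 := (div_lt_one (Real.log_pos hc1)).mpr
    (Real.log_lt_log (by positivity) (by nlinarith))
  set P := (1 - θ) * q with hP
  have hPpos : 0 < P := mul_pos (by linarith) hq
  set e := θ * q - q - 1 with he
  have he1 : e < -1 := by simp only [he]; nlinarith
  have heP : e + 1 = -P := by simp only [he, hP]; ring
  set Ck := (k : ℝ≥0∞) ^ q with hCk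
  have hk0' : (0 : ℝ≥0∞) < (k : ℝ≥0∞) := by exact_mod_cast zero_lt_one.trans hk
  have hCk0 : Ck ≠ 0 := (ENNReal.rpow_pos hk0' coe_ne_top).ne'
  have hCkt : Ck ≠ ⊤ := ENNReal.rpow_ne_top_of_nonneg hq.le coe_ne_top
  have hX : (0 : ℝ) < 1 - (2 * (k : ℝ))⁻¹ := by
    rw [sub_pos]; exact inv_lt_one_of_one_lt₀ hc1
  set X := ENNReal.ofReal (1 - (2 * (k : ℝ))⁻¹) with hXdef
  have hX0 : X ≠ 0 := (ENNReal.ofReal_pos.mpr hX).ne'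
  have hXt : X ≠ ⊤ := ENNReal.ofReal_ne_top
  refine ⟨Ck * Ck * ENNReal.ofReal P⁻¹ * X⁻¹, ?_, ?_⟩
  · exact ENNReal.mul_ne_top (ENNReal.mul_ne_top
      (ENNReal.mul_ne_top hCkt hCkt) ENNReal.ofReal_ne_top) (ENNReal.inv_ne_top.mpr hX0)
  intro r hr
  set g : ℝ → ℝ≥0∞ := fun t => (yinv Φ (ENNReal.ofReal t)⁻¹)⁻¹ with hg
  have hgr0 : g r ≠ 0 := (g_pos hΦ hk hΔ hr).ne'
  have hgrt : g r ≠ ⊤ := (g_lt_top hΦ hr).ne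
  have hgq0 : g r ^ q ≠ 0 := (ENNReal.rpow_pos (g_pos hΦ hk hΔ hr) hgrt).ne'
  have hgqt : g r ^ q ≠ ⊤ := ENNReal.rpow_ne_top_of_nonneg hq.le hgrt
  set D := Ck * g r ^ q * ENNReal.ofReal (r ^ (-(θ * q))) with hD
  have hDt : D ≠ ⊤ :=
    ENNReal.mul_ne_top (ENNReal.mul_ne_top hCkt hgqt) ENNReal.ofReal_ne_top
  -- Step A : pointwise upper bound on the integrand over `Ioi r`
  have hpoint : ∀ t ∈ Set.Ioi r,
      ((ENNReal.ofReal t)⁻¹ * g t) ^ q * (ENNReal.ofReal t)⁻¹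
        ≤ D * ENNReal.ofReal (t ^ e) := by
    intro t ht
    have htr : r < t := ht
    have ht0 : 0 < t := hr.trans htr
    have hb := g_bound (Φ := Φ) hk hΔ hr htr
    have hOR : (ENNReal.ofReal t)⁻¹ = ENNReal.ofReal t⁻¹ :=
      (ENNReal.ofReal_inv_of_pos ht0).symm
    have hreal : (t⁻¹) ^ q * ((t / r) ^ θ) ^ q * t⁻¹ = r ^ (-(θ * q)) * t ^ e := by
      have h1 : (t⁻¹ : ℝ) ^ q = t ^ (-q) := by
        rw [← Real.rpow_neg_one t, ← Real.rpow_mul ht0.le]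
        norm_num
      have h2 : ((t / r) ^ θ : ℝ) ^ q = t ^ (θ * q) * r ^ (-(θ * q)) := by
        rw [← Real.rpow_mul (by positivity), Real.div_rpow ht0.le hr.le,
          Real.rpow_neg hr.le, div_eq_mul_inv]
      have h3 : (t⁻¹ : ℝ) = t ^ (-1 : ℝ) := (Real.rpow_neg_one t).symm
      rw [h1, h2, h3]
      rw [show t ^ (-q) * (t ^ (θ * q) * r ^ (-(θ * q))) * t ^ (-1 : ℝ)
          = r ^ (-(θ * q)) * (t ^ (-q) * t ^ (θ * q) * t ^ (-1 : ℝ)) from by ring]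
      rw [← Real.rpow_add ht0, ← Real.rpow_add ht0]
      congr 1
      simp only [he]; ring_nf
    calc ((ENNReal.ofReal t)⁻¹ * g t) ^ q * (ENNReal.ofReal t)⁻¹
        ≤ ((ENNReal.ofReal t)⁻¹ *
            ((k : ℝ≥0∞) * ENNReal.ofReal ((t / r) ^ θ) * g r)) ^ q *
            (ENNReal.ofReal t)⁻¹ := by
          exact mul_le_mul_left
            (ENNReal.rpow_le_rpow (mul_le_mul_right hb _) hq.le) _
      _ = Ck * g r ^ q *
            (ENNReal.ofReal t⁻¹ ^ q * ENNReal.ofReal ((t / r) ^ θ) ^ q *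
              ENNReal.ofReal t⁻¹) := by
          rw [hOR]
          simp only [ENNReal.mul_rpow_of_nonneg _ _ hq.le, hCk]
          ring
      _ = Ck * g r ^ q *
            (ENNReal.ofReal (r ^ (-(θ * q))) * ENNReal.ofReal (t ^ e)) := by
          congr 1
          rw [ENNReal.ofReal_rpow_of_pos (by positivity),
            ENNReal.ofReal_rpow_of_pos (by positivity),
            ← ENNReal.ofReal_mul (by positivity), ← ENNReal.ofReal_mul (by positivity),
            hreal, ENNReal.ofReal_mul (by positivity)]
      _ = D * ENNReal.ofReal (t ^ e) := by rw [hD]; ring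
  -- Step A' : integrate the upper bound
  have hupper : (∫⁻ t in Set.Ioi r,
      ((ENNReal.ofReal t)⁻¹ * g t) ^ q * (ENNReal.ofReal t)⁻¹)
        ≤ Ck * g r ^ q * ENNReal.ofReal (r ^ (-q)) * ENNReal.ofReal P⁻¹ := by
    have hmeas : Measurable fun t : ℝ => D * ENNReal.ofReal (t ^ e) := by
      exact measurable_const.mul (ENNReal.measurable_ofReal.comp (by measurability))
    calc (∫⁻ t in Set.Ioi r, ((ENNReal.ofReal t)⁻¹ * g t) ^ q * (ENNReal.ofReal t)⁻¹)
        ≤ ∫⁻ t in Set.Ioi r, D * ENNReal.ofReal (t ^ e) := setLIntegral_mono hmeas hpoint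
      _ = D * ∫⁻ t in Set.Ioi r, ENNReal.ofReal (t ^ e) := lintegral_const_mul' _ _ hDt
      _ = D * ENNReal.ofReal (-r ^ (e + 1) / (e + 1)) := by rw [lint_rpow e he1 hr]
      _ = Ck * g r ^ q * ENNReal.ofReal (r ^ (-q)) * ENNReal.ofReal P⁻¹ := by
          have hval : -r ^ (e + 1) / (e + 1) = r ^ (e + 1) * P⁻¹ := by
            rw [heP]; field_simp
          rw [hval, hD, ENNReal.ofReal_mul (by positivity)]
          rw [show Ck * g r ^ q * ENNReal.ofReal (r ^ (-(θ * q))) *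
              (ENNReal.ofReal (r ^ (e + 1)) * ENNReal.ofReal P⁻¹)
            = Ck * g r ^ q * (ENNReal.ofReal (r ^ (-(θ * q))) *
              ENNReal.ofReal (r ^ (e + 1))) * ENNReal.ofReal P⁻¹ from by ring]
          congr 2
          rw [← ENNReal.ofReal_mul (by positivity), ← Real.rpow_add hr]
          congr 2
          simp only [he]; ring
  -- Step B : lower bound for the right-hand integral
  set r' := r * (2 * (k : ℝ))⁻¹ with hr'def
  have hr'0 : 0 < r' := by positivity
  have hr'r : r' < r := by
    rw [hr'def]
    nlinarith [mul_pos hr (sub_pos.mpr (inv_lt_one_of_one_lt₀ hc1))]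
  have hdoub : g r ≤ (k : ℝ≥0∞) * g r' := by
    have h2k : (2 : ℝ≥0∞) * (k : ℝ≥0∞) = ENNReal.ofReal (2 * (k : ℝ)) := by
      rw [ENNReal.ofReal_mul (by norm_num)]
      simp [ENNReal.ofReal_ofNat, ENNReal.ofReal_coe_nnreal]
    have hofr : ENNReal.ofReal r = 2 * (k : ℝ≥0∞) * ENNReal.ofReal r' := by
      rw [hr'def, h2k, ← ENNReal.ofReal_mul (by positivity)]
      congr 1
      field_simp
    calc g r = (yinv Φ ((2 * (k : ℝ≥0∞)) * ENNReal.ofReal r')⁻¹)⁻¹ := by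
          rw [hg]; simp only; rw [hofr]
      _ ≤ (k : ℝ≥0∞) * (yinv Φ (ENNReal.ofReal r')⁻¹)⁻¹ := G_doubling hk hΔ _
      _ = (k : ℝ≥0∞) * g r' := rfl
  have hlow : Ck⁻¹ * g r ^ q * (ENNReal.ofReal r)⁻¹ * ENNReal.ofReal (r - r')
      ≤ ∫⁻ t in Set.Ioo (0 : ℝ) r, g t ^ q * (ENNReal.ofReal t)⁻¹ := by
    have hgq' : g r ^ q ≤ Ck * g r' ^ q := by
      calc g r ^ q ≤ ((k : ℝ≥0∞) * g r') ^ q := ENNReal.rpow_le_rpow hdoub hq.le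
        _ = Ck * g r' ^ q := by rw [ENNReal.mul_rpow_of_nonneg _ _ hq.le]
    have hconst : Ck⁻¹ * g r ^ q ≤ g r' ^ q := by
      calc Ck⁻¹ * g r ^ q ≤ Ck⁻¹ * (Ck * g r' ^ q) := mul_le_mul_right hgq' _
        _ = g r' ^ q := by rw [← mul_assoc, ENNReal.inv_mul_cancel hCk0 hCkt, one_mul]
    have hmeasf : Measurable fun t : ℝ => g t ^ q * (ENNReal.ofReal t)⁻¹ :=
      ((g_meas (Φ := Φ)).pow_const _).mul (ENNReal.measurable_ofReal.comp measurable_id).inv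
    calc Ck⁻¹ * g r ^ q * (ENNReal.ofReal r)⁻¹ * ENNReal.ofReal (r - r')
        = Ck⁻¹ * g r ^ q * (ENNReal.ofReal r)⁻¹ * volume (Set.Ioo r' r) := by
          rw [Real.volume_Ioo]
      _ = ∫⁻ _ in Set.Ioo r' r, Ck⁻¹ * g r ^ q * (ENNReal.ofReal r)⁻¹ :=
          (setLIntegral_const _ _).symm
      _ ≤ ∫⁻ t in Set.Ioo r' r, g t ^ q * (ENNReal.ofReal t)⁻¹ := by
          apply setLIntegral_mono hmeasf
          intro t ht
          have h1 : Ck⁻¹ * g r ^ q ≤ g t ^ q :=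
            hconst.trans (ENNReal.rpow_le_rpow (g_mono ht.1.le) hq.le)
          have h2 : (ENNReal.ofReal r)⁻¹ ≤ (ENNReal.ofReal t)⁻¹ :=
            ENNReal.inv_le_inv.mpr (ENNReal.ofReal_le_ofReal ht.2.le)
          exact mul_le_mul' h1 h2
      _ ≤ ∫⁻ t in Set.Ioo (0 : ℝ) r, g t ^ q * (ENNReal.ofReal t)⁻¹ :=
          lintegral_mono_set (Set.Ioo_subset_Ioo hr'0.le le_rfl)
  have hORq : (ENNReal.ofReal r)⁻¹ ^ q = ENNReal.ofReal (r ^ (-q)) := by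
    rw [← ENNReal.ofReal_inv_of_pos hr, ENNReal.ofReal_rpow_of_pos (inv_pos.mpr hr),
      Real.inv_rpow hr.le, ← Real.rpow_neg hr.le]
  have hXeq : (ENNReal.ofReal r)⁻¹ * ENNReal.ofReal (r - r') = X := by
    rw [← ENNReal.ofReal_inv_of_pos hr, ← ENNReal.ofReal_mul (by positivity), hXdef]
    congr 1
    rw [hr'def]
    field_simp
  show (∫⁻ t in Set.Ioi r, ((ENNReal.ofReal t)⁻¹ * g t) ^ q * (ENNReal.ofReal t)⁻¹)
      ≤ Ck * Ck * ENNReal.ofReal P⁻¹ * X⁻¹ * (ENNReal.ofReal r)⁻¹ ^ q *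
        ∫⁻ t in Set.Ioo (0 : ℝ) r, g t ^ q * (ENNReal.ofReal t)⁻¹
  calc (∫⁻ t in Set.Ioi r, ((ENNReal.ofReal t)⁻¹ * g t) ^ q * (ENNReal.ofReal t)⁻¹)
      ≤ Ck * g r ^ q * ENNReal.ofReal (r ^ (-q)) * ENNReal.ofReal P⁻¹ := hupper
    _ = Ck * Ck * ENNReal.ofReal P⁻¹ * X⁻¹ * (ENNReal.ofReal r)⁻¹ ^ q *
        (Ck⁻¹ * g r ^ q * (ENNReal.ofReal r)⁻¹ * ENNReal.ofReal (r - r')) := by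
        rw [hORq]
        have hexp : Ck * Ck * ENNReal.ofReal P⁻¹ * X⁻¹ * ENNReal.ofReal (r ^ (-q)) *
            (Ck⁻¹ * g r ^ q * (ENNReal.ofReal r)⁻¹ * ENNReal.ofReal (r - r'))
          = (Ck * Ck⁻¹) * (X⁻¹ * ((ENNReal.ofReal r)⁻¹ * ENNReal.ofReal (r - r'))) *
            (Ck * g r ^ q * ENNReal.ofReal (r ^ (-q)) * ENNReal.ofReal P⁻¹) := by ring
        rw [hexp, ENNReal.mul_inv_cancel hCk0 hCkt, hXeq,
          ENNReal.inv_mul_cancel hX0 hXt, one_mul, one_mul]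
    _ ≤ Ck * Ck * ENNReal.ofReal P⁻¹ * X⁻¹ * (ENNReal.ofReal r)⁻¹ ^ q *
        ∫⁻ t in Set.Ioo (0 : ℝ) r, g t ^ q * (ENNReal.ofReal t)⁻¹ :=
        mul_le_mul_right hlow _
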